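/- arXiv:1108.2579 — 3 statements merged into one kernel-verified Lean document; each statement's English description precedes it below -/
import Mathlib

section
/- For each integer m ≥ 2, let T_m = { a : 1 ≤ a ≤ m², gcd(a, m) = 1, and m² divides a^{λ(m)} − 1 }. Then lim_{m → ∞} |T_m| / φ(m²) = 0, where φ is Euler's totient function. -/
/-- The Carmichael function `λ(m)`: the smallest positive integer `n` such that
`a ^ n ≡ 1 (mod m)` for every integer `a` coprime to `m`. -/
noncomputable def carmichael (m : ℕ) : ℕ :=
  sInf {n : ℕ | 0 < n ∧ ∀ a : ℤ, Int.gcd a m = 1 → a ^ n ≡ 1 [ZMOD (m : ℤ)]}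

/-- The Carmichael quotient `C_m(a) = (a^{λ(m)} - 1) / m`. -/
noncomputable def carQuot (m : ℕ) (a : ℤ) : ℤ := (a ^ carmichael m - 1) / m
open scoped Classical in
/-- `T m` is the set of bases `a` with `1 ≤ a ≤ m²`, `gcd(a, m) = 1`, for which
`m` is a Carmichael–Wieferich number with base `a`, i.e. `m² ∣ a^{λ(m)} - 1`. -/
noncomputable def wieferichCount (m : ℕ) : ℕ :=
  ((Finset.Icc 1 (m ^ 2)).filter
    (fun a => Nat.gcd a m = 1 ∧ ((m : ℤ) ^ 2 ∣ (a : ℤ) ^ carmichael m - 1))).card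

namespace CW

lemma mem_S_iff (m : ℕ) (hm : m ≠ 0) (n : ℕ) :
    n ∈ {n : ℕ | 0 < n ∧ ∀ a : ℤ, Int.gcd a m = 1 → a ^ n ≡ 1 [ZMOD (m : ℤ)]} ↔
      (0 < n ∧ ∀ x : ZMod m, IsUnit x → x ^ n = 1) := by
  constructor
  · rintro ⟨hn, h⟩
    refine ⟨hn, fun x hx => ?_⟩
    obtain ⟨u, rfl⟩ := hx
    have hc : Nat.Coprime ((u : ZMod m).val) m := ZMod.val_coe_unit_coprime u
    have h1 := h (((u : ZMod m).val : ℕ) : ℤ) (by rwa [Int.gcd_natCast_natCast])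
    have h2 : ((((((u : ZMod m).val : ℕ) : ℤ)) ^ n : ℤ) : ZMod m) = ((1:ℤ) : ZMod m) :=
      (ZMod.intCast_eq_intCast_iff _ _ _).mpr h1
    push_cast at h2
    haveI : NeZero m := ⟨hm⟩
    rwa [ZMod.natCast_val, ZMod.cast_id] at h2
  · rintro ⟨hn, h⟩
    refine ⟨hn, fun a ha => ?_⟩
    have hu : IsUnit (a : ZMod m) := by
      have h1 : IsCoprime a (m : ℤ) := Int.isCoprime_iff_gcd_eq_one.mpr ha
      have h2 := h1.map (Int.castRingHom (ZMod m))
      simp only [Int.coe_castRingHom, map_natCast, ZMod.natCast_self] at h2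
      exact isCoprime_zero_right.mp h2
    have h3 := h _ hu
    rw [← ZMod.intCast_eq_intCast_iff]
    push_cast
    exact h3

lemma totient_mem_S (m : ℕ) (hm : m ≠ 0) :
    (Nat.totient m) ∈ {n : ℕ | 0 < n ∧ ∀ a : ℤ, Int.gcd a m = 1 → a ^ n ≡ 1 [ZMOD (m : ℤ)]} := by
  rw [mem_S_iff m hm]
  refine ⟨Nat.totient_pos.mpr (Nat.pos_of_ne_zero hm), fun x hx => ?_⟩
  obtain ⟨u, rfl⟩ := hx
  have := ZMod.pow_totient u
  calc (u : ZMod m) ^ m.totient = ((u ^ m.totient : (ZMod m)ˣ) : ZMod m) := by push_cast; ring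
  _ = 1 := by rw [this]; rfl

lemma carmichael_spec (m : ℕ) (hm : m ≠ 0) :
    0 < carmichael m ∧ ∀ x : ZMod m, IsUnit x → x ^ (carmichael m) = 1 := by
  rw [← mem_S_iff m hm]
  exact Nat.sInf_mem ⟨_, totient_mem_S m hm⟩

lemma carmichael_dvd (m : ℕ) (hm : m ≠ 0) {n : ℕ} (hn : 0 < n)
    (h : ∀ x : ZMod m, IsUnit x → x ^ n = 1) : carmichael m ∣ n := by
  obtain ⟨hpos, hprop⟩ := carmichael_spec m hm
  set L := carmichael m with hL
  have hg : Nat.gcd L n ∈ {n : ℕ | 0 < n ∧ ∀ a : ℤ, Int.gcd a m = 1 → a ^ n ≡ 1 [ZMOD (m : ℤ)]} := by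
    rw [mem_S_iff m hm]
    refine ⟨Nat.gcd_pos_of_pos_right _ hn, fun x hx => ?_⟩
    have h1 : orderOf x ∣ L := orderOf_dvd_iff_pow_eq_one.mpr (hprop x hx)
    have h2 : orderOf x ∣ n := orderOf_dvd_iff_pow_eq_one.mpr (h x hx)
    exact orderOf_dvd_iff_pow_eq_one.mp (Nat.dvd_gcd h1 h2)
  have hle : L ≤ Nat.gcd L n := Nat.sInf_le hg
  have hge : Nat.gcd L n ≤ L := Nat.le_of_dvd hpos (Nat.gcd_dvd_left _ _)
  have : Nat.gcd L n = L := le_antisymm hge hle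
  rw [← this]
  exact Nat.gcd_dvd_right _ _

lemma carmichael_dvd_totient (m : ℕ) (hm : m ≠ 0) : carmichael m ∣ Nat.totient m := by
  refine carmichael_dvd m hm (Nat.totient_pos.mpr (Nat.pos_of_ne_zero hm)) ?_
  have := (mem_S_iff m hm (Nat.totient m)).mp (totient_mem_S m hm)
  exact this.2

lemma dvd_iff_pow_eq (m : ℕ) (a : ℕ) (L : ℕ) :
    ((m : ℤ) ^ 2 ∣ (a : ℤ) ^ L - 1) ↔ ((a : ZMod (m^2)) ^ L = 1) := by
  have h : ((m:ℤ)^2) = ((m^2 : ℕ) : ℤ) := by push_cast; ring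
  rw [h, ← ZMod.intCast_zmod_eq_zero_iff_dvd]
  push_cast
  rw [sub_eq_zero]

lemma count_mul (m : ℕ) (hm : 2 ≤ m) :
    wieferichCount m * Nat.card ((powMonoidHom (carmichael m) :
        (ZMod (m^2))ˣ →* (ZMod (m^2))ˣ).range) = Nat.totient (m^2) := by
  classical
  haveI : NeZero (m^2) := ⟨pow_ne_zero _ (by omega)⟩
  set L := carmichael m with hLdef
  set f : (ZMod (m^2))ˣ →* (ZMod (m^2))ˣ := (powMonoidHom L : (ZMod (m^2))ˣ →* (ZMod (m^2))ˣ) with hf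
  have hker : wieferichCount m = Nat.card f.ker := by
    have h1 : Nat.card f.ker
        = (Finset.univ.filter fun u : (ZMod (m^2))ˣ => u ∈ f.ker).card := by
      rw [Nat.card_eq_fintype_card]
      exact Fintype.card_subtype _
    rw [h1, wieferichCount]
    refine Finset.card_bij'
      (i := fun a ha => ZMod.unitOfCoprime a (by
        simp only [Finset.mem_filter] at ha
        exact Nat.Coprime.pow_right 2 ha.2.1))
      (j := fun u _ => ((u : ZMod (m^2))).val) ?_ ?_ ?_ ?_
    · intro a ha
      simp only [Finset.mem_filter, Finset.mem_univ, true_and] at ha ⊢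
      rw [MonoidHom.mem_ker, hf]
      have hdvd := ha.2.2
      rw [dvd_iff_pow_eq m a L] at hdvd
      ext
      push_cast [ZMod.coe_unitOfCoprime]
      exact hdvd
    · intro u hu
      simp only [Finset.mem_filter, Finset.mem_univ, true_and, Finset.mem_Icc] at hu ⊢
      have hc : Nat.Coprime ((u : ZMod (m^2)).val) (m^2) := ZMod.val_coe_unit_coprime u
      have hc1 : Nat.gcd ((u : ZMod (m^2)).val) m = 1 :=
        Nat.Coprime.coprime_dvd_right (dvd_pow_self m (by norm_num)) hc
      have hval : 1 ≤ (u : ZMod (m^2)).val := by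
        rcases Nat.eq_zero_or_pos ((u : ZMod (m^2)).val) with h0 | h0
        · exfalso
          rw [h0] at hc1
          simp only [Nat.gcd_zero_left] at hc1
          omega
        · exact h0
      refine ⟨⟨hval, le_of_lt (ZMod.val_lt _)⟩, hc1, ?_⟩
      rw [dvd_iff_pow_eq m _ L]
      rw [ZMod.natCast_val, ZMod.cast_id]
      rw [MonoidHom.mem_ker, hf] at hu
      have := congrArg (Units.val) hu
      push_cast at this
      exact this
    · intro a ha
      simp only [Finset.mem_filter, Finset.mem_Icc] at ha
      have halt : a < m^2 := by
        rcases lt_or_eq_of_le ha.1.2 with h | h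
        · exact h
        · exfalso
          have := ha.2.1
          rw [h] at this
          have h2 : Nat.gcd (m^2) m = m := Nat.gcd_eq_right (dvd_pow_self m (by norm_num))
          omega
      simp only [ZMod.coe_unitOfCoprime]
      exact ZMod.val_natCast_of_lt halt
    · intro u hu
      ext
      simp only [ZMod.coe_unitOfCoprime]
      rw [ZMod.natCast_val, ZMod.cast_id]
  have hcard := Subgroup.card_eq_card_quotient_mul_card_subgroup f.ker
  have hquot : Nat.card ((ZMod (m^2))ˣ ⧸ f.ker) = Nat.card f.range :=
    Nat.card_congr (QuotientGroup.quotientKerEquivRange f).toEquiv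
  have htot : Nat.card (ZMod (m^2))ˣ = Nat.totient (m^2) := by
    rw [Nat.card_eq_fintype_card, ZMod.card_units_eq_totient]
  rw [hquot] at hcard
  rw [hker, ← htot, hcard]
  exact Nat.mul_comm _ _

lemma sum_split (F : ℕ → ℕ) (r : ℕ) :
    ∑ i ∈ Finset.range (r + 2 + 1), F i
      = (∑ i ∈ Finset.range (r+1), F (i+2)) + F 1 + F 0 := by
  rw [Finset.sum_range_succ' F (r+2), Finset.sum_range_succ' (fun i => F (i+1)) (r+1)]

lemma claim_odd (p : ℕ) (hp : p.Prime) (hodd : p ≠ 2) :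
    ∀ j : ℕ, ∃ u : ℕ, ¬ p ∣ u ∧ (1+p)^(p^j) = 1 + p^(j+1) * u := by
  have hp3 : 3 ≤ p := by
    rcases hp.two_le.lt_or_eq with h | h
    · omega
    · omega
  intro j
  induction j with
  | zero =>
    refine ⟨1, fun h => hp.one_lt.ne' (Nat.eq_one_of_dvd_one h), ?_⟩
    rw [pow_zero, pow_one, pow_one]
    ring
  | succ j ih =>
    obtain ⟨u, hu, heq⟩ := ih
    set t := p^(j+1) * u with ht
    have hstep : (1+p)^(p^(j+1)) = (1 + t)^p := by
      rw [pow_succ, pow_mul, heq]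
    have hbin : (1 + t)^p = ∑ i ∈ Finset.range (p+1), t^i * 1^(p-i) * (p.choose i) := by
      rw [add_comm 1 t]
      exact add_pow t 1 p
    obtain ⟨r, hr⟩ : ∃ r, p = r + 2 := ⟨p - 2, by omega⟩
    have hsplit : ∑ i ∈ Finset.range (p+1), t^i * 1^(p-i) * (p.choose i)
        = (∑ i ∈ Finset.range (r+1), t^(i+2) * 1^(p-(i+2)) * (p.choose (i+2)))
          + t^1 * 1^(p-1) * (p.choose 1) + t^0 * 1^(p-0) * (p.choose 0) := by
      have h := sum_split (fun i => t^i * 1^(p-i) * (p.choose i)) r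
      rw [show r + 2 + 1 = p + 1 by omega] at h
      exact h
    have hSdvd : p^(j+3) ∣ (∑ i ∈ Finset.range (r+1), t^(i+2) * 1^(p-(i+2)) * (p.choose (i+2))) := by
      apply Finset.dvd_sum
      intro i _
      have htpow : t^(i+2) = p^((j+1)*(i+2)) * u^(i+2) := by
        rw [ht, mul_pow, ← pow_mul]
      rcases Nat.eq_zero_or_pos i with hi0 | hi1
      · subst hi0
        obtain ⟨c, hc⟩ : p ∣ p.choose 2 := hp.dvd_choose_self (by norm_num) (by omega)
        rw [htpow, hc]
        calc p^(j+3) ∣ p^(2*j+3) := pow_dvd_pow p (by omega)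
        _ = p^((j+1)*(0+2)) * p := by ring
        _ ∣ p^((j+1)*(0+2)) * u^(0+2) * 1^(p-(0+2)) * (p * c) :=
            ⟨u^(0+2) * 1^(p-(0+2)) * c, by ring⟩
      · rw [htpow]
        have hge : j + 3 ≤ (j+1)*(i+2) := by
          have : (j+1) * 3 ≤ (j+1)*(i+2) := Nat.mul_le_mul_left _ (by omega)
          omega
        exact dvd_mul_of_dvd_left (dvd_mul_of_dvd_left (dvd_mul_of_dvd_left (pow_dvd_pow p hge) _) _) _
    obtain ⟨w, hw⟩ := hSdvd
    refine ⟨u + p * w, fun hdvd => hu ?_, ?_⟩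
    · have hpw : p ∣ p * w := Dvd.intro w rfl
      rw [add_comm] at hdvd
      exact (Nat.dvd_add_right hpw).mp hdvd
    · rw [hstep, hbin, hsplit, hw]
      have h1 : t^1 * 1^(p-1) * (p.choose 1) = p * t := by
        simp [Nat.choose_one_right, mul_comm]
      have h0 : t^0 * 1^(p-0) * (p.choose 0) = 1 := by simp
      rw [h1, h0, ht]
      ring

lemma claim_two : ∀ j : ℕ, ∃ u : ℕ, ¬ 2 ∣ u ∧ 5^(2^j) = 1 + 2^(j+2) * u := by
  intro j
  induction j with
  | zero => exact ⟨1, by norm_num, by norm_num⟩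
  | succ j ih =>
    obtain ⟨u, hu, heq⟩ := ih
    refine ⟨u + 2^(j+1) * u^2, fun hdvd => hu ?_, ?_⟩
    · have h2 : (2:ℕ) ∣ 2^(j+1) * u^2 := Dvd.dvd.mul_right (dvd_pow_self 2 (by omega)) _
      rw [add_comm] at hdvd
      exact (Nat.dvd_add_right h2).mp hdvd
    · rw [pow_succ, pow_mul, heq]
      ring

lemma pow_dvd_orderOf {M : Type*} [Monoid M] (x : M) (p a : ℕ) (hp : p.Prime)
    (h1 : x ^ (p^a) = 1) (h2 : a = 0 ∨ x ^ (p^(a-1)) ≠ 1) : p ^ a ∣ orderOf x := by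
  rcases h2 with h2 | h2
  · simpa [h2] using dvd_refl 1
  · have hdvd : orderOf x ∣ p^a := orderOf_dvd_iff_pow_eq_one.mpr h1
    obtain ⟨s, hs, hord⟩ := (Nat.dvd_prime_pow hp).mp hdvd
    have hsa : s = a := by
      by_contra hne
      have hs' : s ≤ a - 1 := by omega
      exact h2 (orderOf_dvd_iff_pow_eq_one.mp (hord ▸ pow_dvd_pow p hs'))
    rw [hord, hsa]

lemma exists_unit_order (p : ℕ) (hp : p.Prime) (k : ℕ) :
    ∃ v : (ZMod (p^k))ˣ, p ^ (k - (if p = 2 then 2 else 1)) ∣ orderOf v := by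
  haveI : NeZero (p^k) := ⟨pow_ne_zero _ hp.pos.ne'⟩
  by_cases hple : k ≤ (if p = 2 then 2 else 1)
  · exact ⟨1, by simp [Nat.sub_eq_zero_of_le hple]⟩
  push_neg at hple
  by_cases h2 : p = 2
  · subst h2
    have hk3 : 3 ≤ k := by simp at hple; omega
    have hcop : Nat.Coprime 5 (2^k) := Nat.Coprime.pow_right _ (by norm_num)
    refine ⟨ZMod.unitOfCoprime 5 hcop, ?_⟩
    simp only [if_pos rfl]
    rw [← orderOf_units]
    apply pow_dvd_orderOf _ 2 (k-2) Nat.prime_two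
    · obtain ⟨u, _, hequ⟩ := claim_two (k-2)
      rw [ZMod.coe_unitOfCoprime]
      rw [show k - 2 + 2 = k by omega] at hequ
      have hth : (((5^(2^(k-2)) : ℕ)) : ZMod (2^k)) = 1 := by
        rw [hequ, Nat.cast_add, Nat.cast_one, Nat.cast_mul, ZMod.natCast_self, zero_mul, add_zero]
      exact_mod_cast hth
    · right
      obtain ⟨u, hu, hequ⟩ := claim_two (k-3)
      rw [show k - 2 - 1 = k - 3 by omega]
      intro hcon
      rw [ZMod.coe_unitOfCoprime] at hcon
      have hcast : (((5^(2^(k-3)) : ℕ)) : ZMod (2^k)) = 1 := by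
        push_cast at hcon ⊢
        exact hcon
      rw [hequ] at hcast
      have hzero : ((2^(k-1) * u : ℕ) : ZMod (2^k)) = 0 := by
        have h1 : ((1 + 2^(k-3+2) * u : ℕ) : ZMod (2^k)) = 1 := hcast
        rw [show k - 3 + 2 = k - 1 by omega] at h1
        push_cast at h1 ⊢
        linear_combination h1
      rw [ZMod.natCast_eq_zero_iff] at hzero
      have hfin : (2:ℕ) ∣ u := by
        have h1 : 2^(k-1) * 2 ∣ 2^(k-1) * u := by
          rw [← pow_succ, show k - 1 + 1 = k by omega]
          exact hzero
        exact (Nat.mul_dvd_mul_iff_left (Nat.pow_pos (by norm_num))).mp h1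
      exact hu hfin
  · have hk2 : 2 ≤ k := by simp [h2] at hple; omega
    have hcop : Nat.Coprime (1+p) (p^k) :=
      Nat.Coprime.pow_right _ (by simpa [Nat.add_comm] using Nat.coprime_succ_self p)
    refine ⟨ZMod.unitOfCoprime (1+p) hcop, ?_⟩
    simp only [if_neg h2]
    rw [← orderOf_units]
    apply pow_dvd_orderOf _ p (k-1) hp
    · obtain ⟨u, _, hequ⟩ := claim_odd p hp h2 (k-1)
      rw [ZMod.coe_unitOfCoprime]
      rw [show k - 1 + 1 = k by omega] at hequ
      have hth : ((((1+p)^(p^(k-1)) : ℕ)) : ZMod (p^k)) = 1 := by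
        rw [hequ, Nat.cast_add, Nat.cast_one, Nat.cast_mul, ZMod.natCast_self, zero_mul, add_zero]
      exact_mod_cast hth
    · right
      obtain ⟨u, hu, hequ⟩ := claim_odd p hp h2 (k-2)
      rw [show k - 1 - 1 = k - 2 by omega]
      intro hcon
      rw [ZMod.coe_unitOfCoprime] at hcon
      have hcast : ((((1+p)^(p^(k-2)) : ℕ)) : ZMod (p^k)) = 1 := by
        push_cast at hcon ⊢
        exact hcon
      rw [hequ] at hcast
      have hzero : ((p^(k-1) * u : ℕ) : ZMod (p^k)) = 0 := by
        have h1 : ((1 + p^(k-2+1) * u : ℕ) : ZMod (p^k)) = 1 := hcast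
        rw [show k - 2 + 1 = k - 1 by omega] at h1
        push_cast at h1 ⊢
        linear_combination h1
      rw [ZMod.natCast_eq_zero_iff] at hzero
      have hfin : p ∣ u := by
        have h1 : p^(k-1) * p ∣ p^(k-1) * u := by
          rw [← pow_succ, show k - 1 + 1 = k by omega]
          exact hzero
        exact (Nat.mul_dvd_mul_iff_left (Nat.pow_pos hp.pos)).mp h1
      exact hu hfin
lemma pow_dvd_card_range (m : ℕ) (hm : 2 ≤ m) (p : ℕ) (hp : p.Prime) (hpm : p ∣ m) :
    p ^ ((2 * m.factorization p - (if p = 2 then 2 else 1))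
          - (carmichael m).factorization p)
      ∣ Nat.card ((powMonoidHom (carmichael m) :
          (ZMod (m^2))ˣ →* (ZMod (m^2))ˣ).range) := by
  classical
  haveI : NeZero (m^2) := ⟨pow_ne_zero _ (by omega)⟩
  set L := carmichael m with hL
  set e := m.factorization p with he
  set δ : ℕ := (if p = 2 then 2 else 1) with hδ
  have hdvd2 : p^(2*e) ∣ m^2 := by
    have h1 : p^e ∣ m := Nat.ordProj_dvd m p
    calc p^(2*e) = (p^e)^2 := by rw [mul_comm, pow_mul]
    _ ∣ m^2 := pow_dvd_pow_of_dvd h1 2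
  haveI : NeZero (p^(2*e)) := ⟨pow_ne_zero _ hp.pos.ne'⟩
  obtain ⟨v, hv⟩ := exists_unit_order p hp (2*e)
  obtain ⟨w, hw⟩ := ZMod.unitsMap_surjective hdvd2 v
  have h1 : orderOf v ∣ orderOf w := by rw [← hw]; exact orderOf_map_dvd _ w
  have h2 : p^(2*e - δ) ∣ orderOf w := dvd_trans hv h1
  set f : (ZMod (m^2))ˣ →* (ZMod (m^2))ˣ :=
    (powMonoidHom L : (ZMod (m^2))ˣ →* (ZMod (m^2))ˣ) with hf
  have h3 : orderOf (f w) ∣ Nat.card f.range := by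
    have hmem : f w ∈ f.range := ⟨w, rfl⟩
    have hx := orderOf_dvd_natCard (⟨f w, hmem⟩ : f.range)
    have heq : orderOf (⟨f w, hmem⟩ : f.range) = orderOf (f w) := by
      rw [← orderOf_injective f.range.subtype (Subgroup.subtype_injective _) ⟨f w, hmem⟩]
      rfl
    rwa [heq] at hx
  have h4 : orderOf (f w) = orderOf w / Nat.gcd (orderOf w) L := by
    have : f w = w ^ L := rfl
    rw [this, orderOf_pow]
  set d := orderOf w with hd
  have hd0 : d ≠ 0 := (orderOf_pos w).ne'
  have hL0 : L ≠ 0 := (carmichael_spec m (by omega)).1.ne'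
  have hg0 : Nat.gcd d L ≠ 0 := Nat.gcd_ne_zero_left hd0
  have hgd : Nat.gcd d L ∣ d := Nat.gcd_dvd_left _ _
  have hq0 : d / Nat.gcd d L ≠ 0 := by
    have : 0 < d / Nat.gcd d L :=
      Nat.div_pos (Nat.le_of_dvd (Nat.pos_of_ne_zero hd0) hgd) (Nat.pos_of_ne_zero hg0)
    omega
  have hAle : 2*e - δ ≤ d.factorization p :=
    (hp.pow_dvd_iff_le_factorization hd0).mp h2
  have hval : (d / Nat.gcd d L).factorization p
      = d.factorization p - min (d.factorization p) (L.factorization p) := by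
    rw [Nat.factorization_div hgd, Nat.factorization_gcd hd0 hL0]
    simp [Finsupp.tsub_apply, Finsupp.inf_apply]
  have hfin : p ^ ((2*e - δ) - L.factorization p) ∣ d / Nat.gcd d L := by
    rw [hp.pow_dvd_iff_le_factorization hq0, hval]
    omega
  exact dvd_trans hfin (h4 ▸ h3)

lemma vtot_le (m : ℕ) (hm : 2 ≤ m) (p : ℕ) (hpm : p ∈ m.primeFactors) :
    (Nat.totient m).factorization p
      ≤ (m.factorization p - 1) + ∑ q ∈ m.primeFactors, (q-1).factorization p := by
  have hm0 : m ≠ 0 := by omega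
  rw [Nat.totient_eq_prod_factorization hm0]
  have hprod : m.factorization.prod (fun q k => q ^ (k - 1) * (q - 1))
      = ∏ q ∈ m.primeFactors, q ^ (m.factorization q - 1) * (q - 1) := by
    rw [Finsupp.prod, Nat.support_factorization]
  rw [hprod]
  have hne : ∀ q ∈ m.primeFactors, q ^ (m.factorization q - 1) * (q - 1) ≠ 0 := by
    intro q hq
    have hq2 : 2 ≤ q := (Nat.prime_of_mem_primeFactors hq).two_le
    have hpos : 0 < q ^ (m.factorization q - 1) * (q - 1) :=
      Nat.mul_pos (Nat.pow_pos (by omega)) (by omega)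
    omega
  rw [Nat.factorization_prod hne]
  rw [Finset.sum_apply']
  have hterm : ∀ q ∈ m.primeFactors,
      (q ^ (m.factorization q - 1) * (q - 1)).factorization p
        ≤ (if q = p then m.factorization p - 1 else 0) + (q-1).factorization p := by
    intro q hq
    have hq2 : 2 ≤ q := (Nat.prime_of_mem_primeFactors hq).two_le
    have hqp : (q ^ (m.factorization q - 1)).factorization p
        = if q = p then m.factorization q - 1 else 0 := by
      rw [(Nat.prime_of_mem_primeFactors hq).factorization_pow]
      exact Finsupp.single_apply
    rw [Nat.factorization_mul (pow_ne_zero _ (by omega : q ≠ 0)) (by omega : q - 1 ≠ 0)]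
    rw [Finsupp.add_apply, hqp]
    rcases eq_or_ne q p with h | h
    · subst h; simp
    · simp [h]
  calc ∑ q ∈ m.primeFactors, ((q ^ (m.factorization q - 1) * (q - 1)).factorization p)
      ≤ ∑ q ∈ m.primeFactors,
        ((if q = p then m.factorization p - 1 else 0) + (q-1).factorization p) :=
        Finset.sum_le_sum hterm
  _ = (∑ q ∈ m.primeFactors, (if q = p then m.factorization p - 1 else 0))
        + ∑ q ∈ m.primeFactors, (q-1).factorization p := Finset.sum_add_distrib
  _ = (m.factorization p - 1) + ∑ q ∈ m.primeFactors, (q-1).factorization p := by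
        rw [Finset.sum_ite_eq' m.primeFactors p (fun _ => m.factorization p - 1)]
        simp [hpm]

lemma key (B : ℕ) (hB : 2 ≤ B) (m : ℕ)
    (hm : B^(B*(B^2+B+1)) + 2*B ≤ m) :
    B * wieferichCount m ≤ Nat.totient (m^2) := by
  classical
  have hm2 : 2 ≤ m := by
    have h1 : B ≤ B^(B*(B^2+B+1)) := Nat.le_self_pow (by positivity) B
    omega
  have hm0 : m ≠ 0 := by omega
  haveI : NeZero (m^2) := ⟨pow_ne_zero _ (by omega)⟩
  set L := carmichael m with hLdef
  set f : (ZMod (m^2))ˣ →* (ZMod (m^2))ˣ :=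
    (powMonoidHom L : (ZMod (m^2))ˣ →* (ZMod (m^2))ˣ) with hf
  have hcm := count_mul m hm2
  have hrange0 : Nat.card f.range ≠ 0 := by
    haveI : Nonempty f.range := ⟨1⟩
    exact Nat.card_pos.ne'
  suffices hsuff : B ≤ Nat.card f.range by
    calc B * wieferichCount m ≤ Nat.card f.range * wieferichCount m :=
        Nat.mul_le_mul_right _ hsuff
    _ = wieferichCount m * Nat.card f.range := Nat.mul_comm _ _
    _ = Nat.totient (m^2) := hcm
  -- main claim: some prime power contribution is ≥ B
  by_contra hlt
  push_neg at hlt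
  have hsmall : ∀ p ∈ m.primeFactors,
      p ^ ((2 * m.factorization p - (if p = 2 then 2 else 1)) - L.factorization p) < B := by
    intro p hp
    have hpp := Nat.prime_of_mem_primeFactors hp
    have hpd := Nat.dvd_of_mem_primeFactors hp
    have hdvd := pow_dvd_card_range m hm2 p hpp hpd
    have hle : p ^ ((2 * m.factorization p - (if p = 2 then 2 else 1)) - L.factorization p)
        ≤ Nat.card f.range := Nat.le_of_dvd (Nat.pos_of_ne_zero hrange0) hdvd
    omega
  -- notation
  have hPF : m.primeFactors.Nonempty := Nat.nonempty_primeFactors.mpr (by omega)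
  set P := m.primeFactors.max' hPF with hPdef
  have hPmem : P ∈ m.primeFactors := Finset.max'_mem _ _
  have hPp := Nat.prime_of_mem_primeFactors hPmem
  have heP : 1 ≤ m.factorization P :=
    (Nat.Prime.factorization_pos_of_dvd hPp hm0 (Nat.dvd_of_mem_primeFactors hPmem))
  have hsum0 : ∑ q ∈ m.primeFactors, (q-1).factorization P = 0 := by
    apply Finset.sum_eq_zero
    intro q hq
    have hq2 : 2 ≤ q := (Nat.prime_of_mem_primeFactors hq).two_le
    have hqP : q ≤ P := Finset.le_max' _ _ hq
    exact Nat.factorization_eq_zero_of_lt (by omega)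
  have hLdvd : L ∣ Nat.totient m := carmichael_dvd_totient m hm0
  have hL0 : L ≠ 0 := (carmichael_spec m hm0).1.ne'
  have htot0 : Nat.totient m ≠ 0 := (Nat.totient_pos.mpr (by omega)).ne'
  have hlfac : ∀ p, L.factorization p ≤ (Nat.totient m).factorization p := by
    intro p
    exact Finsupp.le_def.mp ((Nat.factorization_le_iff_dvd hL0 htot0).mpr hLdvd) p
  have hlP : L.factorization P ≤ m.factorization P - 1 := by
    have := (hlfac P).trans (vtot_le m hm2 P hPmem)
    omega
  have hmprod : m = ∏ q ∈ m.primeFactors, q ^ (m.factorization q) := by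
    conv_lhs => rw [← Nat.factorization_prod_pow_eq_self hm0]
    rw [Finsupp.prod, Nat.support_factorization]
  by_cases hP2 : P = 2
  -- case m = 2^k
  · have hPFeq : m.primeFactors = {2} := by
      apply Finset.eq_singleton_iff_nonempty_unique_mem.mpr
      refine ⟨hPF, fun q hq => ?_⟩
      have hq2 : 2 ≤ q := (Nat.prime_of_mem_primeFactors hq).two_le
      have hqP : q ≤ P := Finset.le_max' _ _ hq
      omega
    have hm_eq : m = 2 ^ (m.factorization 2) := by
      conv_lhs => rw [hmprod]
      rw [hPFeq, Finset.prod_singleton]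
    have hg : m.factorization 2 - 1
        ≤ (2 * m.factorization 2 - 2) - L.factorization 2 := by
      have := hlP
      rw [hP2] at this
      omega
    have hsm := hsmall 2 (hPFeq ▸ Finset.mem_singleton_self 2)
    simp only [if_pos rfl] at hsm
    have h1 : 2 ^ (m.factorization 2 - 1) < B :=
      lt_of_le_of_lt (Nat.pow_le_pow_right (by norm_num) hg) hsm
    have h2 : m < 2 * B := by
      rw [hm_eq]
      have he2 : 1 ≤ m.factorization 2 := by rw [← hP2]; exact heP
      calc 2 ^ (m.factorization 2) = 2 * 2 ^ (m.factorization 2 - 1) := by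
            rw [← pow_succ']
            congr 1
            omega
      _ < 2 * B := by omega
    omega
  -- case P odd
  · have hgP : m.factorization P ≤ (2 * m.factorization P - 1) - L.factorization P := by
      omega
    have hsmP := hsmall P hPmem
    simp only [if_neg hP2] at hsmP
    have hPeB : P ^ (m.factorization P) < B :=
      lt_of_le_of_lt (Nat.pow_le_pow_right hPp.pos hgP) hsmP
    have hPB : P < B := by
      have : P ≤ P ^ (m.factorization P) := Nat.le_self_pow (by omega) P
      omega
    -- all primes < B
    have hqB : ∀ q ∈ m.primeFactors, q < B := by
      intro q hq
      have := Finset.le_max' _ _ hq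
      omega
    -- sum bound
    have hsum_le : ∀ p, ∑ q ∈ m.primeFactors, (q-1).factorization p ≤ B * B := by
      intro p
      have hcard : m.primeFactors.card ≤ B := by
        have hsub : m.primeFactors ⊆ Finset.range B := by
          intro q hq
          exact Finset.mem_range.mpr (hqB q hq)
        calc m.primeFactors.card ≤ (Finset.range B).card := Finset.card_le_card hsub
        _ = B := Finset.card_range B
      have hbound : ∀ q ∈ m.primeFactors, (q-1).factorization p ≤ B := by
        intro q hq
        have hq2 : 2 ≤ q := (Nat.prime_of_mem_primeFactors hq).two_le
        have h1 : (q-1).factorization p < q - 1 + 1 := by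
          rcases eq_or_lt_of_le (show 1 ≤ q - 1 by omega) with h | h
          · rw [← h]
            simp
          · have := Nat.factorization_lt (p := p) (show q - 1 ≠ 0 by omega)
            omega
        have := hqB q hq
        omega
      calc ∑ q ∈ m.primeFactors, (q-1).factorization p
          ≤ ∑ q ∈ m.primeFactors, B := Finset.sum_le_sum hbound
      _ = m.primeFactors.card * B := by rw [Finset.sum_const, smul_eq_mul]
      _ ≤ B * B := Nat.mul_le_mul_right _ hcard
    -- exponent bound
    have hexp : ∀ p ∈ m.primeFactors, m.factorization p ≤ B^2 + B := by
      intro p hp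
      have hpp := Nat.prime_of_mem_primeFactors hp
      have hlp : L.factorization p ≤ (m.factorization p - 1) + B * B :=
        le_trans ((hlfac p).trans (vtot_le m hm2 p hp)) (by
          have := hsum_le p
          omega)
      have hgp : (m.factorization p - 1) - B * B
          ≤ (2 * m.factorization p - (if p = 2 then 2 else 1)) - L.factorization p := by
        have hep : 1 ≤ m.factorization p :=
          Nat.Prime.factorization_pos_of_dvd hpp hm0 (Nat.dvd_of_mem_primeFactors hp)
        have hδle : (if p = 2 then 2 else 1 : ℕ) ≤ 2 := by split <;> omega
        omega
      have hsp := hsmall p hp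
      have hglt : (2 * m.factorization p - (if p = 2 then 2 else 1)) - L.factorization p < B := by
        have := Nat.lt_pow_self hpp.one_lt
          (n := (2 * m.factorization p - (if p = 2 then 2 else 1)) - L.factorization p)
        omega
      have : (m.factorization p - 1) - B * B < B := by omega
      have hBB : B * B = B^2 := by ring
      omega
    -- bound m
    have hmle : m ≤ B ^ ((B^2+B) * B) := by
      calc m = ∏ q ∈ m.primeFactors, q ^ (m.factorization q) := hmprod
      _ ≤ ∏ q ∈ m.primeFactors, B ^ (B^2+B) := by
          apply Finset.prod_le_prod'
          intro q hq
          calc q ^ (m.factorization q) ≤ B ^ (m.factorization q) :=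
              Nat.pow_le_pow_left (le_of_lt (hqB q hq)) _
          _ ≤ B ^ (B^2+B) := Nat.pow_le_pow_right (by omega) (hexp q hq)
      _ = (B ^ (B^2+B)) ^ m.primeFactors.card := by rw [Finset.prod_const]
      _ ≤ (B ^ (B^2+B)) ^ B := by
          apply Nat.pow_le_pow_right (by positivity)
          have hsub : m.primeFactors ⊆ Finset.range B := by
            intro q hq
            exact Finset.mem_range.mpr (hqB q hq)
          calc m.primeFactors.card ≤ (Finset.range B).card := Finset.card_le_card hsub
          _ = B := Finset.card_range B
      _ = B ^ ((B^2+B) * B) := by rw [← pow_mul]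
    have hfinal : B ^ ((B^2+B) * B) ≤ B ^ (B*(B^2+B+1)) := by
      apply Nat.pow_le_pow_right (by omega)
      nlinarith
    omega

theorem final_bound (B : ℕ) (hB : 2 ≤ B) :
    ∃ N : ℕ, ∀ m ≥ N, B * wieferichCount m ≤ Nat.totient (m^2) :=
  ⟨B^(B*(B^2+B+1)) + 2*B, fun m hm => key B hB m hm⟩

end CW

theorem stmt15 :
    Filter.Tendsto (fun m : ℕ => (wieferichCount m : ℝ) / (Nat.totient (m ^ 2) : ℝ))
      Filter.atTop (nhds 0) := by
  rw [Metric.tendsto_atTop]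
  intro ε hε
  obtain ⟨B, hB⟩ := exists_nat_gt (max 1 (1/ε))
  have hB1 : (1:ℝ) < B := (le_max_left 1 (1/ε)).trans_lt hB
  have hB2 : 2 ≤ B := by exact_mod_cast Nat.succ_le_of_lt (by exact_mod_cast hB1)
  obtain ⟨N, hN⟩ := CW.final_bound B hB2
  refine ⟨N, fun n hn => ?_⟩
  have hkey := hN n hn
  rw [Real.dist_eq, sub_zero]
  rw [abs_of_nonneg (by positivity)]
  have hBpos : (0:ℝ) < B := by linarith
  have hinv : 1 / (B:ℝ) < ε := by
    rw [div_lt_iff₀ hBpos]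
    have h1 : 1/ε < B := (le_max_right 1 (1/ε)).trans_lt hB
    have h2 : (1:ℝ) < B * ε := (div_lt_iff₀ hε).mp h1
    linarith [h2]
  rcases Nat.eq_zero_or_pos (Nat.totient (n^2)) with h0 | h0
  · rw [h0]
    simpa using hε
  · have htpos : (0:ℝ) < (Nat.totient (n^2) : ℝ) := by exact_mod_cast h0
    have h1 : (wieferichCount n : ℝ) / (Nat.totient (n^2) : ℝ) ≤ 1 / B := by
      rw [div_le_div_iff₀ htpos hBpos]
      have : (B:ℝ) * (wieferichCount n : ℝ) ≤ (Nat.totient (n^2) : ℝ) := by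
        exact_mod_cast hkey
      linarith [this]
    linarith [h1, hinv]
end

section
/- Let a be a non-zero integer. If there exists a Carmichael–Wieferich number m with base a (so gcd(a, m) = 1 and m² divides a^{λ(m)} − 1) such that m has an odd prime factor, then there exists a Wieferich prime with base a, i.e., an odd prime p not dividing a such that p² divides a^{p−1} − 1. -/
lemma aux_unit (m : ℕ) (b : ℤ) (hb : Int.gcd b m = 1) : IsUnit ((b : ZMod m)) := by
  obtain ⟨u, v, huv⟩ := Int.isCoprime_iff_gcd_eq_one.mpr hb
  refine IsUnit.of_mul_eq_one ((u : ZMod m)) ?_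
  have : ((u * b + v * m : ℤ) : ZMod m) = ((1 : ℤ) : ZMod m) := by rw [huv]
  push_cast at this
  rw [ZMod.natCast_self] at this
  rw [mul_comm]
  simpa using this

lemma aux_mem_iff (m : ℕ) (n : ℕ) (b : ℤ) :
    b ^ n ≡ 1 [ZMOD (m : ℤ)] ↔ ((b : ZMod m)) ^ n = 1 := by
  rw [show ((b : ZMod m)) ^ n = ((b ^ n : ℤ) : ZMod m) by push_cast; ring,
    show (1 : ZMod m) = ((1 : ℤ) : ZMod m) by push_cast; ring,
    ZMod.intCast_eq_intCast_iff]

lemma carmichael_mem (m : ℕ) (hm : 2 ≤ m) :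
    0 < carmichael m ∧
      (∀ a : ℤ, Int.gcd a m = 1 → a ^ carmichael m ≡ 1 [ZMOD (m : ℤ)]) ∧
      carmichael m ∣ m.totient := by
  have hm0 : m ≠ 0 := by omega
  have hφpos : 0 < m.totient := Nat.totient_pos.mpr (by omega)
  have hφmem : m.totient ∈ {n : ℕ | 0 < n ∧ ∀ a : ℤ, Int.gcd a m = 1 →
      a ^ n ≡ 1 [ZMOD (m : ℤ)]} := by
    refine ⟨hφpos, fun b hb => ?_⟩
    rw [aux_mem_iff]
    have hu := aux_unit m b hb
    have := ZMod.pow_totient hu.unit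
    calc ((b : ZMod m)) ^ m.totient = ((hu.unit : (ZMod m)ˣ) : ZMod m) ^ m.totient := by
          rw [IsUnit.unit_spec]
      _ = (((hu.unit ^ m.totient : (ZMod m)ˣ)) : ZMod m) := by push_cast; ring
      _ = 1 := by rw [this]; rfl
  have hmem : carmichael m ∈ {n : ℕ | 0 < n ∧ ∀ a : ℤ, Int.gcd a m = 1 →
      a ^ n ≡ 1 [ZMOD (m : ℤ)]} := Nat.sInf_mem ⟨_, hφmem⟩
  obtain ⟨hpos, huniv⟩ := hmem
  refine ⟨hpos, huniv, ?_⟩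
  -- gcd argument
  set g := Nat.gcd (carmichael m) m.totient with hg
  have hgmem : g ∈ {n : ℕ | 0 < n ∧ ∀ a : ℤ, Int.gcd a m = 1 →
      a ^ n ≡ 1 [ZMOD (m : ℤ)]} := by
    refine ⟨Nat.gcd_pos_of_pos_left _ hpos, fun b hb => ?_⟩
    rw [aux_mem_iff]
    have h1 : ((b : ZMod m)) ^ carmichael m = 1 := (aux_mem_iff m _ b).mp (huniv b hb)
    have h2 : ((b : ZMod m)) ^ m.totient = 1 := (aux_mem_iff m _ b).mp (hφmem.2 b hb)
    have o1 : orderOf ((b : ZMod m)) ∣ carmichael m := orderOf_dvd_of_pow_eq_one h1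
    have o2 : orderOf ((b : ZMod m)) ∣ m.totient := orderOf_dvd_of_pow_eq_one h2
    exact orderOf_dvd_iff_pow_eq_one.mp (Nat.dvd_gcd o1 o2)
  have hle : carmichael m ≤ g := Nat.sInf_le hgmem
  have hge : g ≤ carmichael m := Nat.le_of_dvd hpos (Nat.gcd_dvd_left _ _)
  have : g = carmichael m := le_antisymm hge hle
  rw [← this]
  exact Nat.gcd_dvd_right _ _

theorem stmt17 (a : ℤ) (ha : a ≠ 0) (m : ℕ) (hm : 2 ≤ m) (hco : Int.gcd a m = 1)
    (hw : (m : ℤ) ^ 2 ∣ a ^ carmichael m - 1)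
    (hodd : ∃ p : ℕ, p.Prime ∧ Odd p ∧ p ∣ m) :
    ∃ p : ℕ, p.Prime ∧ Odd p ∧ ¬((p : ℤ) ∣ a) ∧ (p : ℤ) ^ 2 ∣ a ^ (p - 1) - 1 := by
  classical
  have hm0 : m ≠ 0 := by omega
  obtain ⟨hlpos, hluniv, hldvd⟩ := carmichael_mem m hm
  set L := carmichael m with hL
  -- the largest prime factor of m
  have hne : m.primeFactors.Nonempty := Nat.nonempty_primeFactors.mpr (by omega)
  set p := m.primeFactors.max' hne with hpdef
  have hpmem : p ∈ m.primeFactors := m.primeFactors.max'_mem hne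
  have hp : p.Prime := Nat.prime_of_mem_primeFactors hpmem
  have hpm : p ∣ m := Nat.dvd_of_mem_primeFactors hpmem
  have hmax : ∀ q ∈ m.primeFactors, q ≤ p := fun q hq => m.primeFactors.le_max' q hq
  -- p is odd
  obtain ⟨q₀, hq₀p, hq₀odd, hq₀m⟩ := hodd
  have hq₀mem : q₀ ∈ m.primeFactors := Nat.mem_primeFactors.mpr ⟨hq₀p, hq₀m, hm0⟩
  have hq₀3 : 3 ≤ q₀ := by
    rcases hq₀p.eq_two_or_odd' with h | _
    · exact absurd (h ▸ hq₀odd) (by decide)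
    · have := hq₀p.two_le
      rcases Nat.lt_or_ge q₀ 3 with h | h
      · interval_cases q₀
        · exact absurd hq₀odd (by decide)
      · exact h
  have hp3 : 3 ≤ p := le_trans hq₀3 (hmax q₀ hq₀mem)
  have hpodd : Odd p := hp.odd_of_ne_two (by omega)
  have hp2 : p ≠ 2 := by omega
  -- e = v_p(m)
  set e := m.factorization p with he
  have he1 : 1 ≤ e := (Nat.Prime.factorization_pos_of_dvd hp hm0 hpm)
  -- p^e exactly divides m; p^e ∤ φ(m)
  have hnotpe : ¬ p ^ e ∣ m.totient := by
    intro hdvd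
    have hm' : m = p ^ e * (m / p ^ e) := (Nat.ordProj_mul_ordCompl_eq_self m p).symm
    have hcop : Nat.Coprime p (m / p ^ e) := Nat.coprime_ordCompl hp hm0
    have hm'0 : m / p ^ e ≠ 0 := by rw [he]; exact (Nat.ordCompl_pos p hm0).ne'
    have hφmul : m.totient = (p ^ e).totient * (m / p ^ e).totient := by
      conv_lhs => rw [hm']
      exact Nat.totient_mul (Nat.Coprime.pow_left _ hcop)
    have hφpe : (p ^ e).totient = p ^ (e - 1) * (p - 1) := Nat.totient_prime_pow hp he1
    -- p does not divide (p-1) * φ(m/p^e)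
    have hnp1 : ¬ p ∣ (p - 1) := by
      intro h
      have := Nat.le_of_dvd (by omega) h
      omega
    have hnpφ : ¬ p ∣ (m / p ^ e).totient := by
      intro h
      rw [Nat.totient_eq_prod_factorization hm'0] at h
      rw [Finsupp.prod] at h
      obtain ⟨q, hqmem, hqdvd⟩ := (Nat.Prime.prime hp).exists_mem_finset_dvd h
      have hqmem' : q ∈ (m / p ^ e).primeFactors := by
        rwa [Nat.support_factorization] at hqmem
      have hqprime : q.Prime := Nat.prime_of_mem_primeFactors hqmem'
      have hqm : q ∣ m := (Nat.dvd_of_mem_primeFactors hqmem').trans (Nat.div_dvd_of_dvd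
        (Nat.ordProj_dvd m p))
      have hqle : q ≤ p := hmax q (Nat.mem_primeFactors.mpr ⟨hqprime, hqm, hm0⟩)
      have hqnep : q ≠ p := by
        intro h'
        subst h'
        exact (Nat.Prime.coprime_iff_not_dvd hqprime).mp hcop
          (Nat.dvd_of_mem_primeFactors hqmem')
      rcases (Nat.Prime.dvd_mul hp).mp hqdvd with h' | h'
      · exact hqnep ((Nat.prime_dvd_prime_iff_eq hp hqprime).mp (hp.dvd_of_dvd_pow h')).symm
      · have hq2 : 2 ≤ q := hqprime.two_le
        have := Nat.le_of_dvd (by omega) h'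
        omega
    -- now p^e ∣ p^(e-1) * ((p-1) * φ(m/p^e))
    rw [hφmul, hφpe, mul_assoc] at hdvd
    have hcop2 : Nat.Coprime (p ^ e) ((p - 1) * (m / p ^ e).totient) := by
      apply Nat.Coprime.pow_left
      exact Nat.Coprime.mul_right ((Nat.Prime.coprime_iff_not_dvd hp).mpr hnp1)
        ((Nat.Prime.coprime_iff_not_dvd hp).mpr hnpφ)
    have : p ^ e ∣ p ^ (e - 1) := (Nat.Coprime.dvd_of_dvd_mul_right hcop2) hdvd
    have := Nat.le_of_dvd (by positivity) this
    have := Nat.pow_lt_pow_right hp.one_lt (show e - 1 < e by omega)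
    omega
  -- p does not divide a
  have hpa : ¬ (p : ℤ) ∣ a := by
    intro h
    have h2 : (p : ℤ) ∣ (Int.gcd a m : ℤ) := Int.dvd_coe_gcd h (by exact_mod_cast hpm)
    rw [hco] at h2
    have := Int.le_of_dvd one_pos h2
    omega
  -- decide
  by_cases hW : (p : ℤ) ^ 2 ∣ a ^ (p - 1) - 1
  · exact ⟨p, hp, hpodd, hpa, hW⟩
  exfalso
  haveI : Fact p.Prime := ⟨hp⟩
  have ha0 : (a : ZMod p) ≠ 0 := by
    rw [Ne, ZMod.intCast_zmod_eq_zero_iff_dvd]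
    exact hpa
  set t := orderOf ((a : ZMod p)) with ht
  have hfermat : ((a : ZMod p)) ^ (p - 1) = 1 := ZMod.pow_card_sub_one_eq_one ha0
  have htp1 : t ∣ p - 1 := orderOf_dvd_of_pow_eq_one hfermat
  have htpos : 0 < t := by
    have : IsOfFinOrder ((a : ZMod p)) :=
      isOfFinOrder_iff_pow_eq_one.mpr ⟨p - 1, by omega, hfermat⟩
    exact this.orderOf_pos
  have htL : t ∣ L := by
    apply orderOf_dvd_of_pow_eq_one
    have h1 : (m : ℤ) ∣ a ^ L - 1 := by
      have : (m : ℤ) ∣ 1 - a ^ L := Int.ModEq.dvd (hluniv a hco)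
      simpa [neg_sub] using dvd_neg.mpr this
    have h2 : (p : ℤ) ∣ a ^ L - 1 := dvd_trans (by exact_mod_cast hpm) h1
    have : ((a ^ L - 1 : ℤ) : ZMod p) = 0 := (ZMod.intCast_zmod_eq_zero_iff_dvd _ p).mpr h2
    push_cast at this
    linear_combination this
  have hpt : (p : ℤ) ∣ a ^ t - 1 := by
    rw [← ZMod.intCast_zmod_eq_zero_iff_dvd]
    push_cast
    rw [show ((a : ZMod p)) ^ t = 1 from pow_orderOf_eq_one _]
    ring
  have hpx : ¬ (p : ℤ) ∣ a ^ t := fun h => hpa ((Nat.prime_iff_prime_int.mp hp).dvd_of_dvd_pow h)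
  -- LTE applications
  have hLTE1 := Int.emultiplicity_pow_sub_pow hp hpodd (x := a ^ t) (y := 1) (by simpa using hpt)
    hpx (L / t)
  have hLTE2 := Int.emultiplicity_pow_sub_pow hp hpodd (x := a ^ t) (y := 1) (by simpa using hpt)
    hpx ((p - 1) / t)
  rw [one_pow, ← pow_mul, Nat.mul_div_cancel' htL] at hLTE1
  rw [one_pow, ← pow_mul, Nat.mul_div_cancel' htp1] at hLTE2
  -- emultiplicity p ((p-1)/t) = 0
  have hq0 : emultiplicity p ((p - 1) / t) = 0 := by
    rw [emultiplicity_eq_zero]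
    intro h
    have hd : (p - 1) / t ∣ p - 1 := Nat.div_dvd_of_dvd htp1
    have : p ∣ p - 1 := h.trans hd
    have := Nat.le_of_dvd (by omega) this
    omega
  -- key bounds
  have hA : emultiplicity ((p : ℤ)) (a ^ t - 1) < (2 : ℕ) := by
    rw [emultiplicity_lt_iff_not_dvd]
    intro h
    apply hW
    have : emultiplicity ((p : ℤ)) (a ^ (p - 1) - 1) = emultiplicity ((p : ℤ)) (a ^ t - 1) := by
      rw [hLTE2, hq0, add_zero]
    exact pow_dvd_of_le_emultiplicity (this ▸ le_emultiplicity_of_pow_dvd h)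
  have hB : emultiplicity p (L / t) < (e : ℕ) := by
    rw [emultiplicity_lt_iff_not_dvd]
    intro h
    exact hnotpe (h.trans ((Nat.div_dvd_of_dvd htL).trans hldvd))
  have hC : ((e + 1 : ℕ) : ℕ∞) ≤ emultiplicity ((p : ℤ)) (a ^ L - 1) := by
    apply le_emultiplicity_of_pow_dvd
    have h1 : ((p : ℤ)) ^ (2 * e) ∣ (m : ℤ) ^ 2 := by
      have : (p : ℤ) ^ e ∣ (m : ℤ) := by
        exact_mod_cast (Nat.ordProj_dvd m p)
      calc ((p : ℤ)) ^ (2 * e) = ((p : ℤ) ^ e) ^ 2 := by ring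
        _ ∣ (m : ℤ) ^ 2 := pow_dvd_pow_of_dvd this 2
    exact (pow_dvd_pow _ (by omega : e + 1 ≤ 2 * e)).trans (h1.trans hw)
  rw [hLTE1] at hC
  -- finish with ℕ∞ arithmetic
  set A := emultiplicity ((p : ℤ)) (a ^ t - 1) with hAdef
  set B := emultiplicity p (L / t) with hBdef
  have hAtop : A ≠ ⊤ := ne_top_of_lt hA
  have hBtop : B ≠ ⊤ := ne_top_of_lt hB
  lift A to ℕ using hAtop with A'
  lift B to ℕ using hBtop with B'
  have h1 : A' < 2 := by exact_mod_cast hA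
  have h2 : B' < e := by exact_mod_cast hB
  have h3 : e + 1 ≤ A' + B' := by exact_mod_cast hC
  omega
end

section
/- Let m ≥ 2 be an integer with gcd(λ(m), m) = 1, and let a be an integer with 0 < a < m, gcd(a, m) = 1, whose multiplicative order modulo m equals 2. Then C_m(a) is not congruent to 0 modulo m; equivalently, m² does not divide a^{λ(m)} − 1. -/
lemma binom_aux (t M : ℤ) : ∀ k : ℕ, M ^ 2 ∣ (1 + t * M) ^ k - (1 + (k : ℤ) * t * M) := by
  intro k
  induction k with
  | zero => simp
  | succ n ih =>
    have h : (1 + t * M) ^ (n + 1) - (1 + ((n : ℤ) + 1) * t * M)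
        = (1 + t * M) * ((1 + t * M) ^ n - (1 + (n : ℤ) * t * M)) + ((n : ℤ) * t * t) * M ^ 2 := by
      ring
    have : ((n + 1 : ℕ) : ℤ) = (n : ℤ) + 1 := by push_cast; ring
    rw [this, h]
    exact dvd_add (Dvd.dvd.mul_left ih _) (Dvd.intro_left _ rfl)

lemma isUnit_cast_of_gcd (m : ℕ) (a : ℤ) (ha : Int.gcd a m = 1) : IsUnit ((a : ZMod m)) := by
  have hc : IsCoprime (a : ℤ) (m : ℤ) := Int.isCoprime_iff_gcd_eq_one.mpr ha
  obtain ⟨u, v, huv⟩ := hc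
  have : ((u : ZMod m)) * (a : ZMod m) = 1 := by
    have := congrArg (fun x : ℤ => (x : ZMod m)) huv
    push_cast at this
    simpa [ZMod.natCast_self] using this
  exact IsUnit.of_mul_eq_one _ (mul_comm (u : ZMod m) (a : ZMod m) ▸ this)

theorem stmt19 (m : ℕ) (hm : 2 ≤ m) (hlm : Nat.gcd (carmichael m) m = 1)
    (a : ℤ) (h0 : 0 < a) (h1 : a < m) (ha : Int.gcd a m = 1)
    (hord : orderOf ((a : ZMod m)) = 2) :
    ¬((m : ℤ) ^ 2 ∣ a ^ carmichael m - 1) := by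
  intro hdvd
  set L := carmichael m with hLdef
  have hmpos : 0 < m := by omega
  -- the defining set is nonempty (totient is a witness), so L satisfies the property
  have hmem : L ∈ {n : ℕ | 0 < n ∧ ∀ a : ℤ, Int.gcd a m = 1 → a ^ n ≡ 1 [ZMOD (m : ℤ)]} := by
    apply Nat.sInf_mem
    refine ⟨Nat.totient m, Nat.totient_pos.mpr hmpos, fun b hb => ?_⟩
    have hu := isUnit_cast_of_gcd m b hb
    obtain ⟨u, hu⟩ := hu
    have : (b : ZMod m) ^ Nat.totient m = 1 := by
      rw [← hu, ← Units.val_pow_eq_pow_val, ZMod.pow_totient u, Units.val_one]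
    have h' : ((b ^ Nat.totient m : ℤ) : ZMod m) = ((1 : ℤ) : ZMod m) := by
      push_cast; simpa using this
    exact (ZMod.intCast_eq_intCast_iff' _ _ _).mp h'
  obtain ⟨hLpos, hLprop⟩ := hmem
  -- (a : ZMod m) ^ L = 1
  have haL : (a : ZMod m) ^ L = 1 := by
    have := hLprop a ha
    have h' := (ZMod.intCast_eq_intCast_iff' _ _ _).mpr this
    push_cast at h'
    simpa using h'
  have h2L : 2 ∣ L := hord ▸ orderOf_dvd_of_pow_eq_one haL
  obtain ⟨k, hk⟩ := h2L
  -- a ^ 2 ≡ 1 mod m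
  have hsq : (a : ZMod m) ^ 2 = 1 := by rw [← hord]; exact pow_orderOf_eq_one _
  have hdvd2 : (m : ℤ) ∣ a ^ 2 - 1 := by
    have : ((a ^ 2 - 1 : ℤ) : ZMod m) = 0 := by push_cast; rw [hsq]; ring
    exact (ZMod.intCast_zmod_eq_zero_iff_dvd _ _).mp this
  obtain ⟨t, ht⟩ := hdvd2
  have ha2 : a ^ 2 = 1 + t * (m : ℤ) := by linarith [ht]
  -- key divisibility
  have hbin := binom_aux t (m : ℤ) k
  have haLk : a ^ L = (1 + t * (m : ℤ)) ^ k := by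
    rw [hk, pow_mul, ha2]
  have hkt : (m : ℤ) ^ 2 ∣ (k : ℤ) * t * (m : ℤ) := by
    have := dvd_sub hdvd (haLk ▸ hbin)
    have h' : a ^ L - 1 - (a ^ L - (1 + (k : ℤ) * t * (m : ℤ))) = (k : ℤ) * t * (m : ℤ) := by ring
    rwa [h'] at this
  have hmne : (m : ℤ) ≠ 0 := by positivity
  have hmkt : (m : ℤ) ∣ (k : ℤ) * t := by
    have : (m : ℤ) * (m : ℤ) ∣ ((k : ℤ) * t) * (m : ℤ) := by
      have := hkt; rwa [sq] at this
    exact (mul_dvd_mul_iff_right hmne).mp (by rwa [mul_comm ((m:ℤ)) ((m:ℤ))] at this)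
  -- coprimality of k and m
  have hkL : k ∣ L := ⟨2, by rw [hk]; ring⟩
  have hkm : Nat.Coprime k m := Nat.eq_one_of_dvd_one (hlm ▸ Nat.gcd_dvd_gcd_of_dvd_left m hkL)
  have hckm : IsCoprime ((m : ℤ)) ((k : ℤ)) := by
    have := Int.isCoprime_iff_gcd_eq_one.mpr (by rw [Int.gcd_natCast_natCast]; exact hkm)
    exact this.symm
  have hmt : (m : ℤ) ∣ t := hckm.dvd_of_dvd_mul_left hmkt
  obtain ⟨s, hs⟩ := hmt
  -- so m² ∣ a² - 1
  have hm2 : (m : ℤ) ^ 2 ∣ a ^ 2 - 1 := ⟨s, by rw [ht, hs]; ring⟩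
  -- bounds: 0 < a² - 1 < m²
  have hane1 : a ≠ 1 := by
    intro h
    rw [h] at hord
    simp at hord
  have ha2' : 2 ≤ a := by omega
  have hpos : 0 < a ^ 2 - 1 := by nlinarith
  have hlt : a ^ 2 - 1 < (m : ℤ) ^ 2 := by nlinarith
  have := Int.le_of_dvd hpos hm2
  omega
end
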